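/- arXiv:1612.03370 — 4 statements merged into one kernel-verified Lean document; each statement's English description precedes it below -/
import Mathlib

section
/- For every integer τ ≥ 1, the quantity (1/(2π)) ∫_{-π}^{π} (τ + 4 + τ cos k)/(1 + cos k) · Re(2/(1+e^{-ik})) dk equals 1/τ − √(2τ+4)/(τ(τ+2)). -/
open Real intervalIntegral

theorem stmt_0 (τ : ℤ) (hτ : 1 ≤ τ) :
    (1 / (2 * π)) * ∫ k in (-π)..π,
        ((1 + Real.cos k) / ((τ : ℝ) + 4 + (τ : ℝ) * Real.cos k)) *
          (2 / (1 + Complex.exp (-(Complex.I * (k : ℂ))))).re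
      = 1 / (τ : ℝ) - Real.sqrt (2 * (τ : ℝ) + 4) / ((τ : ℝ) * ((τ : ℝ) + 2)) := by
  have ht : (1:ℝ) ≤ (τ:ℝ) := by exact_mod_cast hτ
  set t : ℝ := (τ : ℝ) with ht_def
  have ht0 : t ≠ 0 := by linarith
  set s : ℝ := Real.sqrt (8 * t + 16) with hs_def
  have hs_pos : 0 < s := Real.sqrt_pos.2 (by linarith)
  have hs2 : s ^ 2 = 8 * t + 16 := Real.sq_sqrt (by linarith)
  have hs0 : s ≠ 0 := ne_of_gt hs_pos
  -- Step 1: the integrand is a real function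
  have key : ∀ k : ℝ, ((1 + Real.cos k) / (t + 4 + t * Real.cos k)) *
      (2 / (1 + Complex.exp (-(Complex.I * (k : ℂ))))).re
      = (1 + Real.cos k) / (t + 4 + t * Real.cos k) := by
    intro k
    rcases eq_or_ne (Real.cos k) (-1) with h | h
    · simp [h]
    · have hcos : 1 + Real.cos k ≠ 0 := fun hc => h (by linarith)
      have e1 : (-(Complex.I * (k : ℂ))) = ((-k : ℝ) : ℂ) * Complex.I := by
        push_cast; ring
      have hre1 : (1 + Complex.exp (-(Complex.I * (k : ℂ)))).re = 1 + Real.cos k := by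
        rw [e1, Complex.add_re, Complex.one_re, Complex.exp_ofReal_mul_I_re, Real.cos_neg]
      have him1 : (1 + Complex.exp (-(Complex.I * (k : ℂ)))).im = -Real.sin k := by
        rw [e1, Complex.add_im, Complex.one_im, Complex.exp_ofReal_mul_I_im, Real.sin_neg]
        ring
      have hre : (2 / (1 + Complex.exp (-(Complex.I * (k : ℂ))))).re = 1 := by
        rw [Complex.div_re, hre1, him1, Complex.normSq_apply, hre1, him1]
        have hden : (1 + Real.cos k) * (1 + Real.cos k) + (-Real.sin k) * (-Real.sin k)
            = 2 * (1 + Real.cos k) := by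
          have := Real.sin_sq_add_cos_sq k
          nlinarith [this]
        rw [hden]
        have h2 : (2:ℝ) * (1 + Real.cos k) ≠ 0 := by
          intro hc
          exact hcos (by linarith [mul_eq_zero.mp hc])
        simp only [Complex.re_ofNat, Complex.im_ofNat, zero_mul, zero_div, add_zero]
        field_simp
      rw [hre, mul_one]
  -- Step 2: antiderivative
  set F : ℝ → ℝ := fun x => x / t - (4 / (t * s)) *
      (x - 2 * Real.arctan (t * Real.sin x / (t + 4 + t * Real.cos x + s))) with hF_def
  have hderiv : ∀ x : ℝ, HasDerivAt F ((1 + Real.cos x) / (t + 4 + t * Real.cos x)) x := by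
    intro x
    have hc1 := Real.neg_one_le_cos x
    have hDpos : 0 < t + 4 + t * Real.cos x := by nlinarith
    have hD0 : t + 4 + t * Real.cos x ≠ 0 := ne_of_gt hDpos
    have hEpos : 0 < t + 4 + t * Real.cos x + s := by linarith
    have hE0 : t + 4 + t * Real.cos x + s ≠ 0 := ne_of_gt hEpos
    have h1 : HasDerivAt (fun x => t * Real.sin x) (t * Real.cos x) x :=
      (Real.hasDerivAt_sin x).const_mul t
    have h2 : HasDerivAt (fun x : ℝ => t + 4 + t * Real.cos x + s) (t * (-Real.sin x)) x := by
      simpa using (((Real.hasDerivAt_cos x).const_mul t).const_add (t+4)).add_const s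
    have h3 := (h1.div h2 hE0).arctan
    have h4 : HasDerivAt F
        (1 / t - (4 / (t * s)) * (1 - 2 * (1 / (1 + (t * Real.sin x / (t + 4 + t * Real.cos x + s)) ^ 2) *
          ((t * Real.cos x * (t + 4 + t * Real.cos x + s) - t * Real.sin x * (t * (-Real.sin x))) /
            (t + 4 + t * Real.cos x + s) ^ 2)))) x := by
      have hid := hasDerivAt_id x
      have := (hid.div_const t).sub (((hid.sub (h3.const_mul 2)).const_mul (4 / (t * s))))
      simp at this ⊢
      exact this
    convert h4 using 1
    -- algebraic identity
    have hpy : Real.sin x ^ 2 + Real.cos x ^ 2 = 1 := Real.sin_sq_add_cos_sq x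
    have hkey1 : (t + 4 + t * Real.cos x + s) ^ 2 + (t * Real.sin x) ^ 2
        = 2 * (t + 4 + s) * (t + 4 + t * Real.cos x) := by
      linear_combination hs2 + t ^ 2 * hpy
    have h1u : (1 : ℝ) + (t * Real.sin x / (t + 4 + t * Real.cos x + s)) ^ 2
        = 2 * (t + 4 + s) * (t + 4 + t * Real.cos x) / (t + 4 + t * Real.cos x + s) ^ 2 := by
      field_simp
      linear_combination hkey1
    rw [h1u]
    have hApos : 0 < 2 * (t + 4 + s) * (t + 4 + t * Real.cos x) := by positivity
    have hA0 : (2 * (t + 4 + s) * (t + 4 + t * Real.cos x)) ≠ 0 := ne_of_gt hApos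
    set D : ℝ := t + 4 + t * Real.cos x with hD_def
    set E : ℝ := t + 4 + t * Real.cos x + s with hE_def
    set B : ℝ := t * Real.cos x * E - t * Real.sin x * (t * (-Real.sin x)) with hB_def
    have hb : (1:ℝ) / (2 * (t + 4 + s) * D / E ^ 2) * (B / E ^ 2)
        = B / (2 * (t + 4 + s) * D) := by
      rw [one_div, inv_div, div_mul_div_comm]
      rw [div_eq_div_iff (by positivity) (by positivity)]
      ring
    have hnum : 2 * (t + 4 + s) * D - 2 * B = 2 * (t + 4 + s) * s := by
      rw [hB_def, hE_def, hD_def]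
      linear_combination (-2) * hs2 + (-2 * t^2) * hpy
    have harct : 1 - 2 * ((1:ℝ) / (2 * (t + 4 + s) * D / E ^ 2) * (B / E ^ 2)) = s / D := by
      rw [hb]
      have h8 : (2 * (t + 4 + s) * D - 2 * B) / (2 * (t + 4 + s) * D)
          = 1 - 2 * (B / (2 * (t + 4 + s) * D)) := by
        rw [sub_div, div_self hA0, mul_div_assoc]
      rw [← h8, hnum, show 2 * (t + 4 + s) * s = (2 * (t + 4 + s)) * s by ring,
        show 2 * (t + 4 + s) * D = (2 * (t + 4 + s)) * D by ring,
        mul_div_mul_left s D (by positivity)]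
    rw [harct]
    field_simp
    ring
  -- Step 3: integrability and evaluation
  have hcont : Continuous fun k : ℝ => (1 + Real.cos k) / (t + 4 + t * Real.cos k) := by
    apply Continuous.div (by continuity) (by continuity)
    intro x
    have := Real.neg_one_le_cos x
    nlinarith
  have hInt : ∫ k in (-π)..π, ((1 + Real.cos k) / (t + 4 + t * Real.cos k)) *
      (2 / (1 + Complex.exp (-(Complex.I * (k : ℂ))))).re = F π - F (-π) := by
    rw [show (fun k : ℝ => ((1 + Real.cos k) / (t + 4 + t * Real.cos k)) *
        (2 / (1 + Complex.exp (-(Complex.I * (k : ℂ))))).re)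
        = fun k : ℝ => (1 + Real.cos k) / (t + 4 + t * Real.cos k) from funext key]
    exact intervalIntegral.integral_eq_sub_of_hasDerivAt (fun x _ => hderiv x)
      (hcont.intervalIntegrable _ _)
  rw [hInt]
  -- Step 4: arithmetic
  have hFpi : F π = π / t - (4 / (t * s)) * π := by
    simp [hF_def, Real.sin_pi]
  have hFnpi : F (-π) = -π / t - (4 / (t * s)) * (-π) := by
    simp [hF_def, Real.sin_pi]
  rw [hFpi, hFnpi]
  have hpi : (π:ℝ) ≠ 0 := Real.pi_ne_zero
  have hq_pos : 0 < Real.sqrt (2 * t + 4) := Real.sqrt_pos.2 (by linarith)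
  have hq2 : Real.sqrt (2 * t + 4) ^ 2 = 2 * t + 4 := Real.sq_sqrt (by linarith)
  have hsq : s = 2 * Real.sqrt (2 * t + 4) := by
    rw [hs_def, show (8:ℝ) * t + 16 = 4 * (2 * t + 4) by ring]
    rw [show (4:ℝ) * (2 * t + 4) = (2 * Real.sqrt (2 * t + 4)) ^ 2 by
      rw [mul_pow, hq2]; ring]
    exact Real.sqrt_sq (by positivity)
  rw [hsq]
  have h2q : 2 / (t * Real.sqrt (2 * t + 4)) = Real.sqrt (2 * t + 4) / (t * (t + 2)) := by
    rw [div_eq_div_iff (by positivity) (by positivity)]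
    linear_combination (-t) * hq2
  rw [← h2q]
  field_simp
  ring
end

section
/- For every integer τ ≥ 1, the real part of (1/(2π)) ∫_{-π}^{π} [(1 + cos k)/(τ + 4 + τ cos k)] · (2/(1+e^{-ik}))² dk equals 2/τ − (τ+4)√(2τ+4)/(2τ(τ+2)). -/
open Real intervalIntegral


lemma deriv_aux (a b : ℝ) (hb : 0 < b) (hab : b < a) (k : ℝ) :
    HasDerivAt (fun k : ℝ =>
        (k - 2 * Real.arctan (b * Real.sin k /
          (a + Real.sqrt (a^2 - b^2) + b * Real.cos k))) / Real.sqrt (a^2 - b^2))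
      (1 / (a + b * Real.cos k)) k := by
  set c := Real.sqrt (a^2 - b^2) with hc
  have hc2 : c^2 = a^2 - b^2 := Real.sq_sqrt (by nlinarith)
  have hcpos : 0 < c := Real.sqrt_pos.mpr (by nlinarith)
  have hden : ∀ x : ℝ, 0 < a + c + b * Real.cos x := by
    intro x
    nlinarith [Real.neg_one_le_cos x, hcpos]
  have ha : 0 < a := hb.trans hab
  have hac : 0 < a + c := by positivity
  have hD : 0 < a + b * Real.cos k := by nlinarith [Real.neg_one_le_cos k]
  have hu : HasDerivAt (fun x : ℝ => b * Real.sin x / (a + c + b * Real.cos x))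
      ((b * Real.cos k * (a + c + b * Real.cos k) - b * Real.sin k * (b * -Real.sin k)) /
        (a + c + b * Real.cos k)^2) k := by
    exact HasDerivAt.div ((Real.hasDerivAt_sin k).const_mul b)
      (((Real.hasDerivAt_cos k).const_mul b).const_add (a + c)) (hden k).ne'
  have harc := hu.arctan
  have hF : HasDerivAt (fun x : ℝ =>
      (x - 2 * Real.arctan (b * Real.sin x / (a + c + b * Real.cos x))) / c)
      ((1 - 2 * (1 / (1 + (b * Real.sin k / (a + c + b * Real.cos k))^2) *
        ((b * Real.cos k * (a + c + b * Real.cos k) - b * Real.sin k * (b * -Real.sin k)) /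
        (a + c + b * Real.cos k)^2))) / c)
      k := ((hasDerivAt_id k).sub (harc.const_mul 2)).div_const c
  convert hF using 1
  have hsc := Real.sin_sq_add_cos_sq k
  have h1 : (a + c + b * Real.cos k) ≠ 0 := (hden k).ne'
  have h2 : 1 + (b * Real.sin k / (a + c + b * Real.cos k))^2 =
      (2 * (a + c) * (a + b * Real.cos k)) / (a + c + b * Real.cos k)^2 := by
    field_simp
    linear_combination (b^2) * hsc + hc2
  rw [h2]
  rw [div_div_eq_mul_div, one_mul, div_mul_div_comm]
  have h3 : ((a + c + b * Real.cos k)^2 *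
      (b * Real.cos k * (a + c + b * Real.cos k) - b * Real.sin k * (b * -Real.sin k))) /
      (2 * (a + c) * (a + b * Real.cos k) * (a + c + b * Real.cos k)^2) =
      (b * (Real.cos k * (a + c) + b)) / (2 * (a + c) * (a + b * Real.cos k)) := by
    rw [div_eq_div_iff (mul_pos (mul_pos (mul_pos two_pos hac) hD) (pow_pos (hden k) 2)).ne'
      (mul_pos (mul_pos two_pos hac) hD).ne']
    linear_combination (2*(a+c)*(a + b*Real.cos k)*(a + c + b*Real.cos k)^2*b^2) * hsc
  rw [h3]
  field_simp
  linear_combination hc2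

lemma key_integral (a b : ℝ) (hb : 0 < b) (hab : b < a) :
    ∫ k in (-π)..π, 1 / (a + b * Real.cos k) = 2 * π / Real.sqrt (a^2 - b^2) := by
  have ha : 0 < a := hb.trans hab
  have hD : ∀ x : ℝ, 0 < a + b * Real.cos x := by
    intro x; nlinarith [Real.neg_one_le_cos x]
  have hcont : Continuous fun k : ℝ => 1 / (a + b * Real.cos k) :=
    continuous_const.div (by continuity) (fun x => (hD x).ne')
  rw [intervalIntegral.integral_eq_sub_of_hasDerivAt
    (fun k _ => deriv_aux a b hb hab k) (hcont.intervalIntegrable _ _)]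
  simp [Real.sin_pi, Real.arctan_zero]
  ring


theorem stmt_3 (τ : ℤ) (hτ : 1 ≤ τ) :
    ((1 / (2 * π) : ℂ) * ∫ k in (-π)..π,
        (((1 + Real.cos k) / ((τ : ℝ) + 4 + (τ : ℝ) * Real.cos k) : ℝ) : ℂ) *
          (2 / (1 + Complex.exp (-(Complex.I * (k : ℂ))))) ^ 2).re
      = 2 / (τ : ℝ) -
          ((τ : ℝ) + 4) * Real.sqrt (2 * (τ : ℝ) + 4) / (2 * (τ : ℝ) * ((τ : ℝ) + 2)) := by
  set t : ℝ := (τ : ℝ) with htdef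
  have ht : (1 : ℝ) ≤ t := by rw [htdef]; exact_mod_cast hτ
  have htpos : 0 < t := lt_of_lt_of_le one_pos ht
  have hD : ∀ x : ℝ, 0 < t + 4 + t * Real.cos x := by
    intro x; nlinarith [Real.neg_one_le_cos x]
  -- step 1: a.e. rewrite the complex integrand
  have hae : ∀ᵐ x ∂MeasureTheory.volume, x ∈ Set.uIoc (-π) π →
      (((1 + Real.cos x) / (t + 4 + t * Real.cos x) : ℝ) : ℂ) *
          (2 / (1 + Complex.exp (-(Complex.I * (x : ℂ))))) ^ 2
        = ((2 * Real.cos x / (t + 4 + t * Real.cos x) : ℝ) : ℂ)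
          + ((2 * Real.sin x / (t + 4 + t * Real.cos x) : ℝ) : ℂ) * Complex.I := by
    have hne : ∀ᵐ x : ℝ ∂MeasureTheory.volume, x ≠ π := by
      refine MeasureTheory.ae_iff.mpr ?_
      simp only [ne_eq, not_not]
      have h : {x : ℝ | x = π} = {π} := by ext y; simp
      rw [h]; exact Real.volume_singleton
    filter_upwards [hne] with x hxne hmem
    rw [Set.uIoc_of_le (by linarith [Real.pi_pos])] at hmem
    have hx1 : -π < x := hmem.1
    have hx2 : x < π := lt_of_le_of_ne hmem.2 hxne
    have hcoshalf : 0 < Real.cos (x / 2) :=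
      Real.cos_pos_of_mem_Ioo ⟨by linarith, by linarith⟩
    have h1c : 0 < 1 + Real.cos x := by
      have h := Real.cos_sq (x/2)
      rw [show 2*(x/2) = x by ring] at h
      nlinarith [hcoshalf]
    have hCS : (Real.cos x : ℂ) ^ 2 + (Real.sin x : ℂ) ^ 2 = 1 := by
      push_cast
      exact_mod_cast congrArg (Complex.ofReal)
        (by linarith [Real.sin_sq_add_cos_sq x] : Real.cos x ^ 2 + Real.sin x ^ 2 = 1)
    have hexp : Complex.exp (-(Complex.I * (x : ℂ))) =
        (Real.cos x : ℂ) - (Real.sin x : ℂ) * Complex.I := by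
      have h : -(Complex.I * (x : ℂ)) = ((-x : ℝ) : ℂ) * Complex.I := by push_cast; ring
      rw [h, Complex.exp_mul_I]
      push_cast
      rw [Complex.cos_neg, Complex.sin_neg]
      ring
    have h1C : (1 : ℂ) + ((Real.cos x : ℂ) - (Real.sin x : ℂ) * Complex.I) ≠ 0 := by
      intro h
      have hre := congrArg Complex.re h
      simp [Complex.cos_ofReal_re] at hre
      linarith
    have hDC : ((t : ℂ) + 4 + (t : ℂ) * Complex.cos (x:ℂ)) ≠ 0 := by
      rw [← Complex.ofReal_cos,
        show ((t:ℂ) + 4 + (t:ℂ) * ((Real.cos x : ℝ):ℂ)) = ((t + 4 + t*Real.cos x : ℝ) : ℂ) by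
          push_cast; ring,
        Complex.ofReal_ne_zero]
      exact (hD x).ne'
    rw [hexp]
    push_cast
    have hI : Complex.I^2 = -1 := Complex.I_sq
    have hCS' : Complex.sin (x:ℂ)^2 + Complex.cos (x:ℂ)^2 = 1 := Complex.sin_sq_add_cos_sq _
    have h2C : (2:ℂ) + 2*Complex.cos (x:ℂ) ≠ 0 := by
      rw [← Complex.ofReal_cos,
        show (2:ℂ)+2*((Real.cos x : ℝ):ℂ) = ((2+2*Real.cos x : ℝ):ℂ) by push_cast; ring,
        Complex.ofReal_ne_zero]
      exact ne_of_gt (by linarith)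
    have hr : ((1:ℂ) + (Complex.cos (x:ℂ) - Complex.sin (x:ℂ)*Complex.I))^2 =
        (Complex.cos (x:ℂ) - Complex.sin (x:ℂ)*Complex.I) * (2+2*Complex.cos (x:ℂ)) := by
      linear_combination -hCS' + Complex.sin (x:ℂ)^2 * hI
    have hsub : (Complex.cos (x:ℂ) - Complex.sin (x:ℂ)*Complex.I) ≠ 0 := by
      intro h
      rw [h] at hr
      simp at hr
    have hfrac : (2/(1+(Complex.cos (x:ℂ) - Complex.sin (x:ℂ)*Complex.I)))^2 =
        (4*Complex.cos (x:ℂ) + 4*Complex.sin (x:ℂ)*Complex.I)/(2+2*Complex.cos (x:ℂ)) := by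
      rw [div_pow, hr, div_eq_div_iff (mul_ne_zero hsub h2C) h2C]
      linear_combination (2+2*Complex.cos (x:ℂ))*4*(Complex.sin (x:ℂ)^2*hI - hCS')
    rw [hfrac, div_mul_div_comm, div_eq_iff (mul_ne_zero hDC h2C)]
    field_simp [hDC]
    have hDC' : (t:ℂ) + 4 + Complex.cos (x:ℂ) * t ≠ 0 := by rw [mul_comm (Complex.cos _)]; exact hDC
    field_simp
    ring
  rw [intervalIntegral.integral_congr_ae hae]
  have hcontD : Continuous fun x : ℝ => t + 4 + t * Real.cos x := by continuity
  have hu : Continuous fun x : ℝ => 2 * Real.cos x / (t + 4 + t * Real.cos x) :=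
    (by continuity : Continuous fun x : ℝ => 2 * Real.cos x).div hcontD fun x => (hD x).ne'
  have hv : Continuous fun x : ℝ => 2 * Real.sin x / (t + 4 + t * Real.cos x) :=
    (by continuity : Continuous fun x : ℝ => 2 * Real.sin x).div hcontD fun x => (hD x).ne'
  have hi1 : IntervalIntegrable
      (fun x : ℝ => ((2*Real.cos x/(t+4+t*Real.cos x) : ℝ) : ℂ))
      MeasureTheory.volume (-π) π :=
    (Complex.continuous_ofReal.comp hu).intervalIntegrable _ _
  have hi2 : IntervalIntegrable
      (fun x : ℝ => ((2*Real.sin x/(t+4+t*Real.cos x) : ℝ) : ℂ) * Complex.I)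
      MeasureTheory.volume (-π) π :=
    ((Complex.continuous_ofReal.comp hv).mul continuous_const).intervalIntegrable _ _
  rw [intervalIntegral.integral_add hi1 hi2,
    intervalIntegral.integral_mul_const, intervalIntegral.integral_ofReal,
    intervalIntegral.integral_ofReal]
  rw [show (1 / (2 * (π:ℂ))) = ((1/(2*π) : ℝ) : ℂ) by push_cast; ring]
  simp only [Complex.add_re, Complex.mul_re, Complex.ofReal_re, Complex.ofReal_im,
    Complex.I_re, Complex.I_im, mul_zero, zero_mul, sub_zero, mul_one, zero_sub, add_zero,
    Complex.mul_im, zero_add, neg_zero]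
  have hU : (∫ x in (-π)..π, 2 * Real.cos x / (t + 4 + t * Real.cos x))
      = 2/t * (2*π) - (2*(t+4)/t) * (2*π / Real.sqrt ((t+4)^2 - t^2)) := by
    have hrw : (fun x : ℝ => 2 * Real.cos x / (t + 4 + t * Real.cos x))
        = fun x : ℝ => 2/t - (2*(t+4)/t) * (1 / (t + 4 + t * Real.cos x)) := by
      funext x
      field_simp [htpos.ne', (hD x).ne']
      have hD' : t + 4 + Real.cos x * t ≠ 0 := by rw [mul_comm (Real.cos _)]; exact (hD x).ne'
      field_simp
      ring
    have hint2 : IntervalIntegrable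
        (fun x : ℝ => 2*(t+4)/t * (1/(t+4+t*Real.cos x))) MeasureTheory.volume (-π) π :=
      (continuous_const.mul (continuous_const.div hcontD fun x => (hD x).ne')).intervalIntegrable _ _
    rw [hrw, intervalIntegral.integral_sub intervalIntegrable_const hint2,
      intervalIntegral.integral_const_mul, key_integral (t+4) t htpos (by linarith),
      intervalIntegral.integral_const]
    rw [smul_eq_mul]
    ring
  rw [hU]
  have h84 : (t+4)^2 - t^2 = 4*(2*t+4) := by ring
  have hsq4 : Real.sqrt (4*(2*t+4)) = 2 * Real.sqrt (2*t+4) := by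
    rw [show (4:ℝ)*(2*t+4) = (2*Real.sqrt (2*t+4))^2 by
      rw [mul_pow, Real.sq_sqrt (by linarith)]; ring]
    exact Real.sqrt_sq (by positivity)
  rw [h84, hsq4]
  have hs2 : Real.sqrt (2*t+4) ^ 2 = 2*t+4 := Real.sq_sqrt (by linarith)
  have hspos : 0 < Real.sqrt (2*t+4) := Real.sqrt_pos.mpr (by linarith)
  set s : ℝ := Real.sqrt (2*t+4) with hsdef
  field_simp [Real.pi_ne_zero, htpos.ne', hspos.ne']
  linear_combination (4+t) * hs2
end

section
/- For every positive real τ and complex α, β with |α|² + |β|² = 1, define Ω = √(τ/(τ+2)) and f(x) = [1 + 2Re(conj(α)β) + 2(|β|²−|α|²)x + (1 − 2Re(conj(α)β)(τ+4)/τ)x²] / (π(1 − x²)√(2τ − 2(τ+2)x²)) for x ∈ (−Ω, Ω). Then ∫_{−Ω}^{Ω} f(x) dx = 1 − √(2τ+4)/(2τ+4) − 2(2/τ − (τ+4)√(2τ+4)/(2τ(τ+2)))·Re(conj(α)β). -/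
open Real intervalIntegral

set_option maxHeartbeats 1000000 in
lemma ftc_aux (Ω : ℝ) (hΩ0 : 0 < Ω) (hΩ1 : Ω < 1) (a b c : ℝ) :
    ∫ θ in (-(π/2))..(π/2),
        (a + b * Real.sin θ + c * Real.sin θ ^ 2) / (1 - Ω ^ 2 * Real.sin θ ^ 2)
      = π * (a + c / Ω ^ 2) / Real.sqrt (1 - Ω ^ 2) - π * c / Ω ^ 2 := by
  have hΩ2 : Ω ^ 2 < 1 := by nlinarith
  have hk2 : Real.sqrt (1 - Ω ^ 2) ^ 2 = 1 - Ω ^ 2 := Real.sq_sqrt (by nlinarith)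
  have hkpos : 0 < Real.sqrt (1 - Ω ^ 2) := Real.sqrt_pos.2 (by nlinarith)
  have hDpos : ∀ θ : ℝ, 0 < 1 - Ω ^ 2 * Real.sin θ ^ 2 := by
    intro θ
    nlinarith [Real.sin_sq_le_one θ, sq_nonneg Ω, sq_nonneg (Real.sin θ)]
  have hsqD : ∀ θ : ℝ, 0 < Real.sqrt (1 - Ω ^ 2 * Real.sin θ ^ 2) := fun θ =>
    Real.sqrt_pos.2 (hDpos θ)
  set k : ℝ := Real.sqrt (1 - Ω ^ 2) with hk
  set H : ℝ → ℝ := fun θ =>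
    ((a + c / Ω ^ 2) / k) * Real.arcsin (k * Real.sin θ / Real.sqrt (1 - Ω ^ 2 * Real.sin θ ^ 2))
      - (b / (Ω * k)) * Real.arctan (Ω * Real.cos θ / k) - (c / Ω ^ 2) * θ with hH
  have hcont1 : Continuous fun θ : ℝ => k * Real.sin θ / Real.sqrt (1 - Ω ^ 2 * Real.sin θ ^ 2) :=
    (continuous_const.mul Real.continuous_sin).div
      (Real.continuous_sqrt.comp (by continuity)) (fun θ => (hsqD θ).ne')
  have hHcont : Continuous H := by
    apply Continuous.sub
    apply Continuous.sub
    · exact continuous_const.mul (Real.continuous_arcsin.comp hcont1)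
    · exact continuous_const.mul (Real.continuous_arctan.comp
        ((continuous_const.mul Real.continuous_cos).div_const k))
    · exact continuous_const.mul continuous_id
  have hfc : Continuous fun θ : ℝ =>
      (a + b * Real.sin θ + c * Real.sin θ ^ 2) / (1 - Ω ^ 2 * Real.sin θ ^ 2) :=
    (by continuity : Continuous fun θ:ℝ => a + b * Real.sin θ + c * Real.sin θ ^ 2).div
      (by continuity) (fun θ => (hDpos θ).ne')
  have key : ∀ θ ∈ Set.Ioo (-(π/2)) (π/2), HasDerivAt H
      ((a + b * Real.sin θ + c * Real.sin θ ^ 2) / (1 - Ω ^ 2 * Real.sin θ ^ 2)) θ := by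
    intro θ hθ
    have hco : 0 < Real.cos θ := Real.cos_pos_of_mem_Ioo hθ
    have hDp : 0 < 1 - Ω ^ 2 * Real.sin θ ^ 2 := hDpos θ
    have hsD : 0 < Real.sqrt (1 - Ω ^ 2 * Real.sin θ ^ 2) := hsqD θ
    have hsD2 : Real.sqrt (1 - Ω ^ 2 * Real.sin θ ^ 2) ^ 2 = 1 - Ω ^ 2 * Real.sin θ ^ 2 :=
      Real.sq_sqrt hDp.le
    have hpyth : Real.sin θ ^ 2 + Real.cos θ ^ 2 = 1 := Real.sin_sq_add_cos_sq θ
    have hDd : HasDerivAt (fun t => 1 - Ω ^ 2 * Real.sin t ^ 2)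
        (-(Ω ^ 2 * (2 * Real.sin θ * Real.cos θ))) θ := by
      have h1 : HasDerivAt (fun t => Real.sin t ^ 2) (2 * Real.sin θ * Real.cos θ) θ := by
        simpa using ((Real.hasDerivAt_sin θ).fun_pow 2)
      simpa using (h1.const_mul (Ω ^ 2)).const_sub 1
    have hsqd : HasDerivAt (fun t => Real.sqrt (1 - Ω ^ 2 * Real.sin t ^ 2))
        (-(Ω ^ 2 * (2 * Real.sin θ * Real.cos θ))
          / (2 * Real.sqrt (1 - Ω ^ 2 * Real.sin θ ^ 2))) θ := by
      have := (Real.hasDerivAt_sqrt hDp.ne').comp θ hDd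
      simpa [div_eq_mul_inv, mul_comm, Function.comp_def] using this
    have hnum : HasDerivAt (fun t => k * Real.sin t) (k * Real.cos θ) θ :=
      (Real.hasDerivAt_sin θ).const_mul k
    have hu : HasDerivAt (fun t => k * Real.sin t / Real.sqrt (1 - Ω ^ 2 * Real.sin t ^ 2))
        ((k * Real.cos θ * Real.sqrt (1 - Ω ^ 2 * Real.sin θ ^ 2)
            - k * Real.sin θ * (-(Ω ^ 2 * (2 * Real.sin θ * Real.cos θ))
              / (2 * Real.sqrt (1 - Ω ^ 2 * Real.sin θ ^ 2))))
          / Real.sqrt (1 - Ω ^ 2 * Real.sin θ ^ 2) ^ 2) θ := hnum.div hsqd hsD.ne'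
    have hu2 : (k * Real.sin θ / Real.sqrt (1 - Ω ^ 2 * Real.sin θ ^ 2)) ^ 2 < 1 := by
      rw [div_pow, hsD2, div_lt_one hDp, mul_pow, hk2]
      nlinarith
    have h1 : k * Real.sin θ / Real.sqrt (1 - Ω ^ 2 * Real.sin θ ^ 2) ≠ -1 := by
      intro h; rw [h] at hu2; norm_num at hu2
    have h2 : k * Real.sin θ / Real.sqrt (1 - Ω ^ 2 * Real.sin θ ^ 2) ≠ 1 := by
      intro h; rw [h] at hu2; norm_num at hu2
    have h1u : Real.sqrt (1 - (k * Real.sin θ / Real.sqrt (1 - Ω ^ 2 * Real.sin θ ^ 2)) ^ 2)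
        = Real.cos θ / Real.sqrt (1 - Ω ^ 2 * Real.sin θ ^ 2) := by
      have e : 1 - (k * Real.sin θ / Real.sqrt (1 - Ω ^ 2 * Real.sin θ ^ 2)) ^ 2
          = Real.cos θ ^ 2 / (1 - Ω ^ 2 * Real.sin θ ^ 2) := by
        rw [div_pow, hsD2, mul_pow, hk2]
        field_simp
        nlinarith
      rw [e, Real.sqrt_div (sq_nonneg _), Real.sqrt_sq hco.le]
    have harcsin : HasDerivAt
        (fun t => Real.arcsin (k * Real.sin t / Real.sqrt (1 - Ω ^ 2 * Real.sin t ^ 2)))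
        (1 / Real.sqrt (1 - (k * Real.sin θ / Real.sqrt (1 - Ω ^ 2 * Real.sin θ ^ 2)) ^ 2) *
          ((k * Real.cos θ * Real.sqrt (1 - Ω ^ 2 * Real.sin θ ^ 2)
            - k * Real.sin θ * (-(Ω ^ 2 * (2 * Real.sin θ * Real.cos θ))
              / (2 * Real.sqrt (1 - Ω ^ 2 * Real.sin θ ^ 2))))
          / Real.sqrt (1 - Ω ^ 2 * Real.sin θ ^ 2) ^ 2)) θ :=
      by have := (Real.hasDerivAt_arcsin h1 h2).comp θ hu; exact this
    have hv : HasDerivAt (fun t => Ω * Real.cos t / k) (Ω * -Real.sin θ / k) θ :=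
      ((Real.hasDerivAt_cos θ).const_mul Ω).div_const k
    have harctan : HasDerivAt (fun t => Real.arctan (Ω * Real.cos t / k))
        (1 / (1 + (Ω * Real.cos θ / k) ^ 2) * (Ω * -Real.sin θ / k)) θ :=
      (Real.hasDerivAt_arctan _).comp θ hv
    have hHd : HasDerivAt H
        (((a + c / Ω ^ 2) / k) * (1 / Real.sqrt (1 - (k * Real.sin θ / Real.sqrt (1 - Ω ^ 2 * Real.sin θ ^ 2)) ^ 2) *
          ((k * Real.cos θ * Real.sqrt (1 - Ω ^ 2 * Real.sin θ ^ 2)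
            - k * Real.sin θ * (-(Ω ^ 2 * (2 * Real.sin θ * Real.cos θ))
              / (2 * Real.sqrt (1 - Ω ^ 2 * Real.sin θ ^ 2))))
          / Real.sqrt (1 - Ω ^ 2 * Real.sin θ ^ 2) ^ 2))
         - (b / (Ω * k)) * (1 / (1 + (Ω * Real.cos θ / k) ^ 2) * (Ω * -Real.sin θ / k))
         - (c / Ω ^ 2) * 1) θ :=
      ((harcsin.const_mul _).sub (harctan.const_mul _)).sub ((hasDerivAt_id θ).const_mul _)
    convert hHd using 1
    have hA : 1 / Real.sqrt (1 - (k * Real.sin θ / Real.sqrt (1 - Ω ^ 2 * Real.sin θ ^ 2)) ^ 2) *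
        ((k * Real.cos θ * Real.sqrt (1 - Ω ^ 2 * Real.sin θ ^ 2)
            - k * Real.sin θ * (-(Ω ^ 2 * (2 * Real.sin θ * Real.cos θ))
              / (2 * Real.sqrt (1 - Ω ^ 2 * Real.sin θ ^ 2))))
          / Real.sqrt (1 - Ω ^ 2 * Real.sin θ ^ 2) ^ 2)
        = k / (1 - Ω ^ 2 * Real.sin θ ^ 2) := by
      rw [h1u, one_div_div, hsD2]
      have e1 : k * Real.cos θ * Real.sqrt (1 - Ω ^ 2 * Real.sin θ ^ 2)
            - k * Real.sin θ * (-(Ω ^ 2 * (2 * Real.sin θ * Real.cos θ))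
              / (2 * Real.sqrt (1 - Ω ^ 2 * Real.sin θ ^ 2)))
          = k * Real.cos θ / Real.sqrt (1 - Ω ^ 2 * Real.sin θ ^ 2) := by
        field_simp
        linear_combination hsD2
      rw [e1]
      field_simp
    have hB : 1 / (1 + (Ω * Real.cos θ / k) ^ 2) * (Ω * -Real.sin θ / k)
        = -(Ω * Real.sin θ * k) / (1 - Ω ^ 2 * Real.sin θ ^ 2) := by
      have hden : 1 + (Ω * Real.cos θ / k) ^ 2
          = (1 - Ω ^ 2 * Real.sin θ ^ 2) / (1 - Ω ^ 2) := by
        rw [div_pow, hk2, mul_pow]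
        have h12 : (1:ℝ) - Ω ^ 2 ≠ 0 := by nlinarith
        field_simp
        linear_combination Ω ^ 2 * hpyth
      rw [hden, ← hk2]
      field_simp
    rw [hA, hB]
    have hΩne : (Ω:ℝ) ≠ 0 := hΩ0.ne'
    have hDne : 1 - Ω ^ 2 * Real.sin θ ^ 2 ≠ 0 := hDp.ne'
    field_simp
    have hDne' : 1 - Real.sin θ ^ 2 * Ω ^ 2 ≠ 0 := by rw [mul_comm]; exact hDne
    field_simp
    ring
  have hle : -(π/2) ≤ π/2 := by linarith [Real.pi_pos]
  rw [intervalIntegral.integral_eq_sub_of_hasDeriv_right_of_le hle hHcont.continuousOn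
    (fun θ hθ => (key θ hθ).hasDerivWithinAt) (hfc.intervalIntegrable _ _)]
  have hs1 : Real.sin (π/2) = 1 := Real.sin_pi_div_two
  have hs2 : Real.sin (-(π/2)) = -1 := by rw [Real.sin_neg, Real.sin_pi_div_two]
  have hc1 : Real.cos (π/2) = 0 := Real.cos_pi_div_two
  have hc2 : Real.cos (-(π/2)) = 0 := by rw [Real.cos_neg, Real.cos_pi_div_two]
  rw [hH]
  simp only [hs1, hs2, hc1, hc2, one_pow, neg_one_sq, mul_one, mul_neg_one, mul_zero,
    zero_div, Real.arctan_zero, sub_zero, ← hk, div_self hkpos.ne', neg_div,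
    Real.arcsin_one, Real.arcsin_neg_one]
  ring

set_option maxHeartbeats 1000000 in
theorem stmt_12 (τ : ℝ) (hτ : 0 < τ) (α β : ℂ)
    (h : ‖α‖ ^ 2 + ‖β‖ ^ 2 = 1) :
    let Ω : ℝ := Real.sqrt (τ / (τ + 2))
    (∫ x in (-Ω)..Ω,
        (1 + 2 * ((starRingEnd ℂ) α * β).re +
          2 * (‖β‖ ^ 2 - ‖α‖ ^ 2) * x +
          (1 - 2 * ((starRingEnd ℂ) α * β).re * (τ + 4) / τ) * x ^ 2) /
        (π * (1 - x ^ 2) * Real.sqrt (2 * τ - 2 * (τ + 2) * x ^ 2)))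
      = 1 - Real.sqrt (2 * τ + 4) / (2 * τ + 4) -
          2 * (2 / τ - (τ + 4) * Real.sqrt (2 * τ + 4) / (2 * τ * (τ + 2))) *
            ((starRingEnd ℂ) α * β).re := by
  intro Ω
  have hτ2 : (0:ℝ) < τ + 2 := by linarith
  have hΩsq : Ω ^ 2 = τ / (τ + 2) := Real.sq_sqrt (by positivity)
  have hΩpos : 0 < Ω := Real.sqrt_pos.2 (by positivity)
  have hΩ1 : Ω < 1 := by
    have : Ω = Real.sqrt (τ / (τ + 2)) := rfl
    rw [this, show (1:ℝ) = Real.sqrt 1 by simp]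
    exact Real.sqrt_lt_sqrt (by positivity) (by rw [div_lt_one hτ2]; linarith)
  set c0 : ℝ := ((starRingEnd ℂ) α * β).re with hc0
  set A : ℝ := 1 + 2 * c0 with hA
  set B : ℝ := 2 * (‖β‖ ^ 2 - ‖α‖ ^ 2) with hB
  set C : ℝ := 1 - 2 * c0 * (τ + 4) / τ with hC
  set S : ℝ := Real.sqrt (2 * τ + 4) with hS
  have hSpos : 0 < S := Real.sqrt_pos.2 (by linarith)
  have hS2 : S ^ 2 = 2 * τ + 4 := Real.sq_sqrt (by linarith)
  have hple : -(π/2) ≤ π/2 := by linarith [Real.pi_pos]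
  -- image of Ioo under Ω * sin
  have himg : (fun θ => Ω * Real.sin θ) '' Set.Ioo (-(π/2)) (π/2) = Set.Ioo (-Ω) Ω := by
    ext y
    simp only [Set.mem_image, Set.mem_Ioo]
    constructor
    · rintro ⟨θ, ⟨h1, h2⟩, rfl⟩
      have hsl : Real.sin θ < 1 := by
        have := Real.strictMonoOn_sin (Set.mem_Icc.2 ⟨h1.le, h2.le⟩)
          (Set.mem_Icc.2 ⟨by linarith [Real.pi_pos], le_refl _⟩) h2
        simpa using this
      have hsg : -1 < Real.sin θ := by
        have := Real.strictMonoOn_sin (Set.mem_Icc.2 ⟨le_refl _, by linarith [Real.pi_pos]⟩)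
          (Set.mem_Icc.2 ⟨h1.le, h2.le⟩) h1
        simpa using this
      constructor <;> nlinarith
    · rintro ⟨h1, h2⟩
      have hy1 : -1 < y / Ω := by rw [lt_div_iff₀ hΩpos]; linarith
      have hy2 : y / Ω < 1 := (div_lt_one hΩpos).2 h2
      refine ⟨Real.arcsin (y / Ω), ⟨Real.neg_pi_div_two_lt_arcsin.2 hy1,
        Real.arcsin_lt_pi_div_two.2 hy2⟩, ?_⟩
      rw [Real.sin_arcsin hy1.le hy2.le]
      field_simp
  have hinj : Set.InjOn (fun θ => Ω * Real.sin θ) (Set.Ioo (-(π/2)) (π/2)) := by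
    intro x hx y hy hxy
    exact Real.injOn_sin (Set.Ioo_subset_Icc_self hx) (Set.Ioo_subset_Icc_self hy)
      (mul_left_cancel₀ hΩpos.ne' hxy)
  have hder : ∀ θ ∈ Set.Ioo (-(π/2)) (π/2), HasDerivWithinAt (fun θ => Ω * Real.sin θ)
      (Ω * Real.cos θ) (Set.Ioo (-(π/2)) (π/2)) θ := fun θ _ =>
    ((Real.hasDerivAt_sin θ).const_mul Ω).hasDerivWithinAt
  rw [intervalIntegral.integral_of_le (by linarith), MeasureTheory.integral_Ioc_eq_integral_Ioo,
    ← himg, MeasureTheory.integral_image_eq_integral_abs_deriv_smul measurableSet_Ioo hder hinj]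
  have heq : Set.EqOn
      (fun θ => |Ω * Real.cos θ| •
        ((A + B * (Ω * Real.sin θ) + C * (Ω * Real.sin θ) ^ 2) /
          (π * (1 - (Ω * Real.sin θ) ^ 2) *
            Real.sqrt (2 * τ - 2 * (τ + 2) * (Ω * Real.sin θ) ^ 2))))
      (fun θ => (π * S)⁻¹ *
        ((A + B * Ω * Real.sin θ + C * Ω ^ 2 * Real.sin θ ^ 2) / (1 - Ω ^ 2 * Real.sin θ ^ 2)))
      (Set.Ioo (-(π/2)) (π/2)) := by
    intro θ hθ
    have hco : 0 < Real.cos θ := Real.cos_pos_of_mem_Ioo hθ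
    have hpyth : Real.sin θ ^ 2 + Real.cos θ ^ 2 = 1 := Real.sin_sq_add_cos_sq θ
    have hsin2 : Real.sin θ ^ 2 ≤ 1 := Real.sin_sq_le_one θ
    have hDp : 0 < 1 - Ω ^ 2 * Real.sin θ ^ 2 := by nlinarith
    have hsq : Real.sqrt (2 * τ - 2 * (τ + 2) * (Ω * Real.sin θ) ^ 2)
        = S * (Ω * Real.cos θ) := by
      have e : 2 * τ - 2 * (τ + 2) * (Ω * Real.sin θ) ^ 2
          = (2 * τ + 4) * (Ω * Real.cos θ) ^ 2 := by
        rw [mul_pow, mul_pow, hΩsq]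
        field_simp
        linear_combination (-(2 * τ + 4)) * hpyth
      rw [e, hS, Real.sqrt_mul (by linarith), Real.sqrt_sq (by positivity)]
    simp only
    rw [hsq, abs_of_pos (mul_pos hΩpos hco), smul_eq_mul]
    rw [mul_pow]
    field_simp
  rw [MeasureTheory.setIntegral_congr_fun measurableSet_Ioo heq, MeasureTheory.integral_const_mul,
    ← MeasureTheory.integral_Ioc_eq_integral_Ioo, ← intervalIntegral.integral_of_le hple,
    ftc_aux Ω hΩpos hΩ1 A (B * Ω) (C * Ω ^ 2)]
  -- final algebra
  have h1Ω : 1 - Ω ^ 2 = 2 / (τ + 2) := by rw [hΩsq]; field_simp; ring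
  have hSk : S * Real.sqrt (1 - Ω ^ 2) = 2 := by
    rw [h1Ω, hS, ← Real.sqrt_mul (by linarith)]
    rw [show (2 * τ + 4) * (2 / (τ + 2)) = 4 by field_simp; ring]
    rw [show (4:ℝ) = 2 ^ 2 by norm_num, Real.sqrt_sq (by norm_num)]
  have hkpos : 0 < Real.sqrt (1 - Ω ^ 2) := by
    rw [h1Ω]; exact Real.sqrt_pos.2 (by positivity)
  have step1 : (π * S)⁻¹ * (π * (A + C * Ω ^ 2 / Ω ^ 2) / Real.sqrt (1 - Ω ^ 2)
      - π * (C * Ω ^ 2) / Ω ^ 2)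
      = (A + C) / (S * Real.sqrt (1 - Ω ^ 2)) - C / S := by
    rw [mul_comm S]
    field_simp
  rw [step1, hSk]
  have hCS : C / S = C * S / (2 * τ + 4) := by
    rw [← hS2]
    rw [sq, ← div_div, mul_div_assoc, div_self hSpos.ne', mul_one]
  rw [hCS, hA, hC]
  field_simp
  ring
end

section
/- For every positive real τ and Ω = √(τ/(τ+2)), ∫_{−Ω}^{Ω} x²(1 + x²)/(π(1 − x²)√(2τ − 2(τ+2)x²)) dx = 1 − (5τ+8)√(2τ+4)/(2τ+4)². -/
open Real intervalIntegral


lemma poly_aux (a x : ℝ) (ha : 0 < a) (ha1 : a < 1) (hx2a : x^2 ≤ a^2)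
    (h1x : 0 < 1 - x^2) (ha2 : 0 < 1 - a^2) :
    x^2*(1+x^2) * (1 - a^2) ≤ a^2*(1+a^2) * (1-x^2) := by
  nlinarith [mul_le_mul_of_nonneg_left hx2a (sq_nonneg a),
    mul_le_mul_of_nonneg_left hx2a (sq_nonneg x)]

lemma integrable_aux (a : ℝ) (ha : 0 < a) (ha1 : a < 1) :
    IntervalIntegrable (fun x => x^2*(1+x^2)/((1-x^2)*Real.sqrt (a^2-x^2)))
      MeasureTheory.volume (-a) a := by
  set M : ℝ := a^2*(1+a^2)/(1-a^2) with hM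
  have hM0 : 0 ≤ M := by
    apply div_nonneg <;> nlinarith
  set C : ℝ := M / Real.sqrt a with hC
  have hC0 : 0 ≤ C := div_nonneg hM0 (Real.sqrt_nonneg a)
  clear_value M C
  -- comparison function
  have hg : IntervalIntegrable
      (fun x => C * ((a - x) ^ (-(1/2) : ℝ) + (a + x) ^ (-(1/2) : ℝ)))
      MeasureTheory.volume (-a) a := by
    apply IntervalIntegrable.const_mul
    apply IntervalIntegrable.add
    · have h := (intervalIntegral.intervalIntegrable_rpow' (a := 2*a) (b := 0)
        (r := -(1/2)) (by norm_num)).comp_sub_left a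
      have e1 : a - 2*a = -a := by ring
      have e2 : a - 0 = a := by ring
      rwa [e1, e2] at h
    · have h := (intervalIntegral.intervalIntegrable_rpow' (a := 0) (b := 2*a)
        (r := -(1/2)) (by norm_num)).comp_add_right a
      have e1 : (0:ℝ) - a = -a := by ring
      have e2 : 2*a - a = a := by ring
      rw [e1, e2] at h
      have : (fun x => (a + x) ^ (-(1/2) : ℝ)) = (fun x => (x + a) ^ (-(1/2) : ℝ)) := by
        funext x; rw [add_comm]
      rw [this]
      exact h
  apply hg.mono_fun
  · apply Measurable.aestronglyMeasurable
    fun_prop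
  · rw [Set.uIoc_of_le (by linarith)]
    rw [Filter.EventuallyLE]
    filter_upwards [MeasureTheory.ae_restrict_mem measurableSet_Ioc] with x hx
    clear hg
    obtain ⟨hx1, hx2⟩ := hx
    have hx1' : -1 < x := by linarith
    have hxa : x ≤ a := hx2
    have h1x : 0 < 1 - x^2 := by nlinarith
    have hfnn : 0 ≤ x^2*(1+x^2)/((1-x^2)*Real.sqrt (a^2-x^2)) := by positivity
    have hgskel : 0 ≤ C * ((a - x) ^ (-(1/2) : ℝ) + (a + x) ^ (-(1/2) : ℝ)) := by
      have h1 : (0:ℝ) ≤ (a - x) ^ (-(1/2) : ℝ) := Real.rpow_nonneg (by linarith) _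
      have h2 : (0:ℝ) ≤ (a + x) ^ (-(1/2) : ℝ) := Real.rpow_nonneg (by linarith) _
      positivity
    simp only [Real.norm_eq_abs]
    rw [abs_of_nonneg hfnn, abs_of_nonneg hgskel]
    rcases eq_or_lt_of_le hxa with heq | hlt
    · subst heq
      simp [Real.sqrt_eq_zero']
      positivity
    -- now -a < x < a
    have hamx : 0 < a - x := by linarith
    have hapx : 0 < a + x := by linarith
    set u := Real.sqrt (a - x) with hu
    set v := Real.sqrt (a + x) with hv
    set w := Real.sqrt a with hw
    have hu0 : 0 < u := Real.sqrt_pos.mpr hamx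
    have hv0 : 0 < v := Real.sqrt_pos.mpr hapx
    have hw0 : 0 < w := Real.sqrt_pos.mpr ha
    have hu2 : u^2 = a - x := Real.sq_sqrt hamx.le
    have hv2 : v^2 = a + x := Real.sq_sqrt hapx.le
    have hw2 : w^2 = a := Real.sq_sqrt ha.le
    have hS : Real.sqrt (a^2 - x^2) = u * v := by
      rw [hu, hv, ← Real.sqrt_mul hamx.le]; ring_nf
    have hr1 : (a - x) ^ (-(1/2) : ℝ) = u⁻¹ := by
      rw [Real.rpow_neg hamx.le, ← Real.sqrt_eq_rpow]
    have hr2 : (a + x) ^ (-(1/2) : ℝ) = v⁻¹ := by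
      rw [Real.rpow_neg hapx.le, ← Real.sqrt_eq_rpow]
    rw [hS, hr1, hr2]
    clear_value u v w
    have hwuv : w ≤ u + v := by
      by_contra hcon
      push_neg at hcon
      nlinarith [mul_pos hu0 hv0]
    have hx2a : x^2 ≤ a^2 := by nlinarith
    have ha2 : (0:ℝ) < 1 - a^2 := by nlinarith
    have hnum : x^2*(1+x^2)/(1-x^2) ≤ M := by
      rw [hM, div_le_div_iff₀ h1x ha2]
      exact poly_aux a x ha ha1 hx2a h1x ha2
    have hstep1 : x^2*(1+x^2)/((1-x^2)*(u*v)) ≤ M / (u * v) := by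
      rw [← div_div]
      gcongr
    have hRHS : C*(u⁻¹+v⁻¹) = M*(u+v)/(w*(u*v)) := by
      rw [hC, inv_add_inv hu0.ne' hv0.ne', div_mul_div_comm]
    refine hstep1.trans ?_
    rw [hRHS, div_le_div_iff₀ (by positivity) (by positivity)]
    have hfin : M * (w*(u*v)) ≤ M*((u+v)*(u*v)) :=
      mul_le_mul_of_nonneg_left
        (mul_le_mul_of_nonneg_right hwuv (by positivity)) hM0
    linarith [hfin]


section
variable (a : ℝ)

noncomputable def Faux (a : ℝ) : ℝ → ℝ := fun y =>
  (-(a^2/2+2)) * Real.arcsin (y/a) + y * Real.sqrt (a^2 - y^2)/2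
    + (2/Real.sqrt (1-a^2)) * Real.arcsin (Real.sqrt (1-a^2)*y/(a*Real.sqrt (1-y^2)))

lemma Faux_deriv (a : ℝ) (ha : 0 < a) (ha1 : a < 1) (x : ℝ) (hx : x ∈ Set.Ioo (-a) a) :
    HasDerivAt (Faux a) (x^2*(1+x^2)/((1-x^2)*Real.sqrt (a^2-x^2))) x := by
  obtain ⟨hx1, hx2⟩ := hx
  set b := Real.sqrt (1-a^2) with hbdef
  have ha2 : (0:ℝ) < 1 - a^2 := by nlinarith
  have hb0 : 0 < b := Real.sqrt_pos.mpr ha2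
  have hb2 : b^2 = 1 - a^2 := Real.sq_sqrt ha2.le
  have hx2a : x^2 < a^2 := by nlinarith
  have h1x : 0 < 1 - x^2 := by nlinarith
  have hSpos : 0 < a^2 - x^2 := by linarith
  set S := Real.sqrt (a^2 - x^2) with hSdef
  set T := Real.sqrt (1 - x^2) with hTdef
  have hS0 : 0 < S := Real.sqrt_pos.mpr hSpos
  have hT0 : 0 < T := Real.sqrt_pos.mpr h1x
  have hS2 : S^2 = a^2 - x^2 := Real.sq_sqrt hSpos.le
  have hT2 : T^2 = 1 - x^2 := Real.sq_sqrt h1x.le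
  -- piece 1
  have hxa1 : x/a ≠ -1 := by
    intro h; rw [div_eq_iff ha.ne'] at h; nlinarith
  have hxa2 : x/a ≠ 1 := by
    intro h; rw [div_eq_iff ha.ne'] at h; nlinarith
  have H1' : HasDerivAt (fun y => Real.arcsin (y/a))
      (1 / Real.sqrt (1 - (x/a)^2) * (1/a)) x :=
    HasDerivAt.comp (h₂ := Real.arcsin) x (Real.hasDerivAt_arcsin hxa1 hxa2) ((hasDerivAt_id' x).div_const a)
  have hsa : Real.sqrt (1 - (x/a)^2) = S/a := by
    have e : 1 - (x/a)^2 = (a^2 - x^2)/a^2 := by field_simp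
    rw [e, Real.sqrt_div hSpos.le, Real.sqrt_sq ha.le, hSdef]
  have H1 : HasDerivAt (fun y => Real.arcsin (y/a)) (1/S) x := by
    convert H1' using 1
    rw [hsa]
    field_simp
  -- piece 2
  have hq : HasDerivAt (fun y : ℝ => a^2 - y^2) (-(2*x)) x := by
    simpa using (hasDerivAt_pow 2 x).const_sub (a^2)
  have Hsq : HasDerivAt (fun y => Real.sqrt (a^2 - y^2)) (1/(2*S) * -(2*x)) x :=
    (Real.hasDerivAt_sqrt hSpos.ne').comp x hq
  have H2' : HasDerivAt (fun y => y * Real.sqrt (a^2 - y^2)/2)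
      ((1 * S + x * (1/(2*S) * -(2*x)))/2) x :=
    ((hasDerivAt_id x).mul Hsq).div_const 2
  have H2 : HasDerivAt (fun y => y * Real.sqrt (a^2 - y^2)/2) ((a^2 - 2*x^2)/(2*S)) x := by
    convert H2' using 1
    field_simp
    linear_combination (-1)*hS2
  -- piece 3
  have hq1 : HasDerivAt (fun y : ℝ => 1 - y^2) (-(2*x)) x := by
    simpa using (hasDerivAt_pow 2 x).const_sub (1:ℝ)
  have Hsq1 : HasDerivAt (fun y => Real.sqrt (1 - y^2)) (1/(2*T) * -(2*x)) x :=
    (Real.hasDerivAt_sqrt h1x.ne').comp x hq1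
  have Hv : HasDerivAt (fun y => a * Real.sqrt (1 - y^2)) (a * (1/(2*T) * -(2*x))) x :=
    Hsq1.const_mul a
  have Hu : HasDerivAt (fun y => b * y) b x := by
    simpa using (hasDerivAt_id x).const_mul b
  have hvne : a * T ≠ 0 := by positivity
  have Hw : HasDerivAt (fun y => b * y / (a * Real.sqrt (1 - y^2)))
      ((b * (a*T) - b * x * (a * (1/(2*T) * -(2*x)))) / (a*T)^2) x := Hu.div Hv hvne
  have hwsq : (b*x/(a*T))^2 < 1 := by
    rw [div_pow, div_lt_one (by positivity)]
    have : (a*T)^2 = a^2*(1-x^2) := by rw [mul_pow, hT2]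
    rw [this]
    nlinarith [hb2, hx2a, sq_nonneg x]
  have hwabs : |b*x/(a*T)| < 1 := by
    nlinarith [sq_abs (b*x/(a*T)), abs_nonneg (b*x/(a*T))]
  have hne1 : b*x/(a*T) ≠ -1 := by
    intro h; rw [h] at hwabs; norm_num at hwabs
  have hne2 : b*x/(a*T) ≠ 1 := by
    intro h; rw [h] at hwabs; norm_num at hwabs
  have H3' : HasDerivAt
      (fun y => (2/b) * Real.arcsin (b * y / (a * Real.sqrt (1 - y^2))))
      ((2/b) * (1 / Real.sqrt (1 - (b*x/(a*T))^2) *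
        ((b * (a*T) - b * x * (a * (1/(2*T) * -(2*x)))) / (a*T)^2))) x :=
    ((Real.hasDerivAt_arcsin hne1 hne2).comp x Hw).const_mul (2/b)
  have hsm : Real.sqrt (1 - (b*x/(a*T))^2) = S/(a*T) := by
    have e : 1 - (b*x/(a*T))^2 = (a^2-x^2)/(a*T)^2 := by
      field_simp
      linear_combination a^2 * hT2 - x^2 * hb2
    rw [e, Real.sqrt_div hSpos.le, Real.sqrt_sq (by positivity), hSdef]
  have H3 : HasDerivAt
      (fun y => (2/b) * Real.arcsin (b * y / (a * Real.sqrt (1 - y^2))))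
      (2/((1-x^2)*S)) x := by
    convert H3' using 1
    rw [hsm]
    field_simp
    linear_combination x^2 * hT2
  -- combine
  unfold Faux
  have HF := ((H1.const_mul (-(a^2/2+2))).add H2).add H3
  refine HF.congr_deriv ?_
  field_simp
  ring
end

lemma Faux_cont (a : ℝ) (ha : 0 < a) (ha1 : a < 1) :
    ContinuousOn (Faux a) (Set.Icc (-a) a) := by
  unfold Faux
  apply ContinuousOn.add
  apply ContinuousOn.add
  · exact (continuous_const.mul
      (Real.continuous_arcsin.comp (continuous_id.div_const a))).continuousOn
  · apply Continuous.continuousOn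
    have : Continuous fun y : ℝ => Real.sqrt (a^2 - y^2) :=
      Real.continuous_sqrt.comp (continuous_const.sub (continuous_pow 2))
    exact (continuous_id.mul this).div_const 2
  · apply ContinuousOn.mul continuousOn_const
    apply Real.continuous_arcsin.comp_continuousOn
    apply ContinuousOn.div
    · exact (continuous_const.mul continuous_id).continuousOn
    · exact (continuous_const.mul
        (Real.continuous_sqrt.comp (continuous_const.sub (continuous_pow 2)))).continuousOn
    · intro y hy
      obtain ⟨hy1, hy2⟩ := hy
      have h1 : 0 < 1 - y^2 := by nlinarith
      have : 0 < Real.sqrt (1 - y^2) := Real.sqrt_pos.mpr h1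
      positivity

lemma key (a : ℝ) (ha : 0 < a) (ha1 : a < 1) :
    ∫ x in (-a)..a, x^2*(1+x^2)/((1-x^2)*Real.sqrt (a^2-x^2))
      = π * (2 / Real.sqrt (1-a^2) - a^2/2 - 2) := by
  have ha2 : (0:ℝ) < 1 - a^2 := by nlinarith
  have hb0 : 0 < Real.sqrt (1-a^2) := Real.sqrt_pos.mpr ha2
  have hFTC := intervalIntegral.integral_eq_sub_of_hasDeriv_right_of_le
    (f := Faux a)
    (f' := fun x => x^2*(1+x^2)/((1-x^2)*Real.sqrt (a^2-x^2)))
    (by linarith : -a ≤ a) (Faux_cont a ha ha1)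
    (fun x hx => (Faux_deriv a ha ha1 x hx).hasDerivWithinAt)
    (integrable_aux a ha ha1)
  rw [hFTC]
  unfold Faux
  have e1 : a/a = 1 := div_self ha.ne'
  have e2 : (-a)/a = -1 := by rw [neg_div, e1]
  have e3 : Real.sqrt (a^2 - a^2) = 0 := by simp
  have e4 : Real.sqrt (a^2 - (-a)^2) = 0 := by simp
  have e5 : Real.sqrt (1-a^2)*a/(a*Real.sqrt (1-a^2)) = 1 := by
    rw [mul_comm (Real.sqrt (1-a^2)) a]
    exact div_self (by positivity)
  have e6 : Real.sqrt (1-a^2)*(-a)/(a*Real.sqrt (1-(-a)^2)) = -1 := by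
    rw [neg_sq, mul_neg, neg_div, e5]
  rw [e1, e2, e3, e4, e5, e6, Real.arcsin_one, Real.arcsin_neg_one]
  ring


theorem stmt_14 (τ : ℝ) (hτ : 0 < τ) :
    let Ω : ℝ := Real.sqrt (τ / (τ + 2))
    (∫ x in (-Ω)..Ω,
        x ^ 2 * (1 + x ^ 2) / (π * (1 - x ^ 2) * Real.sqrt (2 * τ - 2 * (τ + 2) * x ^ 2)))
      = 1 - (5 * τ + 8) * Real.sqrt (2 * τ + 4) / (2 * τ + 4) ^ 2 := by
  intro Ω
  have hΩdef : Ω = Real.sqrt (τ/(τ+2)) := rfl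
  have h2 : (0:ℝ) < τ + 2 := by linarith
  have hfrac : τ/(τ+2) < 1 := by rw [div_lt_one h2]; linarith
  have hfrac0 : 0 < τ/(τ+2) := div_pos hτ h2
  have hΩ0 : 0 < Ω := Real.sqrt_pos.mpr hfrac0
  have hΩ1 : Ω < 1 := by
    rw [hΩdef, show (1:ℝ) = Real.sqrt 1 by rw [Real.sqrt_one]]
    exact Real.sqrt_lt_sqrt hfrac0.le hfrac
  have hΩ2 : Ω^2 = τ/(τ+2) := Real.sq_sqrt hfrac0.le
  set s := Real.sqrt (2*τ+4) with hsdef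
  have hs0 : 0 < s := Real.sqrt_pos.mpr (by linarith)
  have hs2 : s^2 = 2*τ+4 := Real.sq_sqrt (by linarith)
  have hpt : ∀ x : ℝ, x ^ 2 * (1 + x ^ 2) / (π * (1 - x ^ 2) * Real.sqrt (2 * τ - 2 * (τ + 2) * x ^ 2))
      = (1/(π*s)) * (x^2*(1+x^2)/((1-x^2)*Real.sqrt (Ω^2-x^2))) := by
    intro x
    have hsq : Real.sqrt (2*τ - 2*(τ+2)*x^2) = s * Real.sqrt (Ω^2-x^2) := by
      rw [hsdef, ← Real.sqrt_mul (by linarith : (0:ℝ) ≤ 2*τ+4)]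
      congr 1
      rw [hΩ2]
      field_simp
      ring
    rw [hsq, div_mul_div_comm, one_mul]
    congr 1
    ring
  simp_rw [hpt]
  rw [intervalIntegral.integral_const_mul, key Ω hΩ0 hΩ1]
  have h1Ω : 1 - Ω^2 = 2/(τ+2) := by rw [hΩ2]; field_simp; ring
  have hsb : Real.sqrt (1-Ω^2) = 2/s := by
    rw [h1Ω, show (2:ℝ)/(τ+2) = 4/(2*τ+4) by field_simp; ring,
      Real.sqrt_div (by norm_num : (0:ℝ) ≤ 4), hsdef,
      show Real.sqrt 4 = 2 by rw [show (4:ℝ) = 2^2 by norm_num, Real.sqrt_sq (by norm_num : (0:ℝ) ≤ 2)]]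
  rw [hsb]
  have hπ : π ≠ 0 := Real.pi_ne_zero
  have hexp : (2*τ+4)^2 = s^4 := by rw [← hs2]; ring
  rw [hexp, hΩ2]
  field_simp
  ring_nf
  linear_combination (-(5*τ+8)) * hs2
end
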